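/- If n = 2r+1 and a ≥ 2 are positive integers, then ρ_2(K(n+2a, r+a)) ≥ 2^{⌊a/2⌋}·ρ_2(K(n,r)). -/

import Mathlib

open Finset

/-- The vertex set of the Kneser graph `K(n,r)`: the `r`-element subsets of `[n] = {1,…,n}`. -/
def KneserVerts (n r : ℕ) : Finset (Finset ℕ) := (Finset.Icc 1 n).powersetCard r

/-- Adjacency in a Kneser graph: distinct disjoint sets. -/
def KneserAdj (u v : Finset ℕ) : Prop := u ≠ v ∧ Disjoint u v

instance (u v : Finset ℕ) : Decidable (KneserAdj u v) := by
  unfold KneserAdj; infer_instance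

/-- `D` is a `k`-dominating set of `K(n,r)`: every vertex outside `D` has at least
`k` neighbours in `D`. -/
def IsKDomSet (n r k : ℕ) (D : Finset (Finset ℕ)) : Prop :=
  D ⊆ KneserVerts n r ∧
    ∀ v ∈ KneserVerts n r, v ∉ D → k ≤ (D.filter fun u => KneserAdj v u).card

/-- `D` is a `k`-tuple dominating set of `K(n,r)`: every vertex has at least `k`
vertices of `D` in its closed neighbourhood. -/
def IsKTupleDomSet (n r k : ℕ) (D : Finset (Finset ℕ)) : Prop :=
  D ⊆ KneserVerts n r ∧
    ∀ v ∈ KneserVerts n r, k ≤ (D.filter fun u => u = v ∨ KneserAdj v u).card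

/-- `D` is a `k`-tuple total dominating set of `K(n,r)`: every vertex has at least
`k` neighbours in `D`. -/
def IsKTupleTotalDomSet (n r k : ℕ) (D : Finset (Finset ℕ)) : Prop :=
  D ⊆ KneserVerts n r ∧
    ∀ v ∈ KneserVerts n r, k ≤ (D.filter fun u => KneserAdj v u).card

/-- The `k`-domination number `γ_k(K(n,r))`. -/
noncomputable def kdomNum (n r k : ℕ) : ℕ :=
  sInf {m | ∃ D, IsKDomSet n r k D ∧ D.card = m}

/-- The `k`-tuple domination number `γ_{×k}(K(n,r))`. -/
noncomputable def ktupleDomNum (n r k : ℕ) : ℕ :=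
  sInf {m | ∃ D, IsKTupleDomSet n r k D ∧ D.card = m}

/-- The `k`-tuple total domination number `γ_{×k,t}(K(n,r))`. -/
noncomputable def ktupleTotalDomNum (n r k : ℕ) : ℕ :=
  sInf {m | ∃ D, IsKTupleTotalDomSet n r k D ∧ D.card = m}

/-- `S` is a 2-packing of `K(n,r)`: any two distinct members are neither adjacent
nor have a common neighbour (i.e. are at distance at least 3). -/
def IsTwoPacking (n r : ℕ) (S : Finset (Finset ℕ)) : Prop :=
  S ⊆ KneserVerts n r ∧
    ∀ u ∈ S, ∀ v ∈ S, u ≠ v →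
      ¬ KneserAdj u v ∧ ∀ w ∈ KneserVerts n r, ¬ (KneserAdj u w ∧ KneserAdj w v)

/-- The 2-packing number `ρ₂(K(n,r))`. -/
noncomputable def twoPackingNum (n r : ℕ) : ℕ :=
  sSup {m | ∃ S, IsTwoPacking n r S ∧ S.card = m}

/-- A clique in a Kneser graph: a family of pairwise disjoint sets. -/
def IsKneserClique (D : Finset (Finset ℕ)) : Prop :=
  ∀ u ∈ D, ∀ v ∈ D, u ≠ v → Disjoint u v

/-- Block `i` of the gadget: a 2-element interval depending on whether `i ∈ ε`. -/
def blkT (N : ℕ) (ε : Finset ℕ) (i : ℕ) : Finset ℕ :=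
  if i ∈ ε then Finset.Icc (N+4*i+1) (N+4*i+2) else Finset.Icc (N+4*i+3) (N+4*i+4)

/-- The gadget set of size `a` in the extra points `N+1, …, N+2a`. -/
def Tset (N a b : ℕ) (ε : Finset ℕ) : Finset ℕ :=
  Finset.Icc (N+4*b+1) (N+2*b+a) ∪ (Finset.range b).biUnion (blkT N ε)

lemma mem_blkT {N : ℕ} {ε : Finset ℕ} {i x : ℕ} :
    x ∈ blkT N ε i ↔ ((i ∈ ε ∧ N+4*i+1 ≤ x ∧ x ≤ N+4*i+2) ∨
      (i ∉ ε ∧ N+4*i+3 ≤ x ∧ x ≤ N+4*i+4)) := by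
  unfold blkT; split <;> simp [Finset.mem_Icc, *]

lemma mem_Tset {N a b : ℕ} {ε : Finset ℕ} {x : ℕ} :
    x ∈ Tset N a b ε ↔ ((N+4*b+1 ≤ x ∧ x ≤ N+2*b+a) ∨
      ∃ i < b, ((i ∈ ε ∧ N+4*i+1 ≤ x ∧ x ≤ N+4*i+2) ∨
        (i ∉ ε ∧ N+4*i+3 ≤ x ∧ x ≤ N+4*i+4))) := by
  simp [Tset, mem_blkT, Finset.mem_union, Finset.mem_biUnion, Finset.mem_Icc, Finset.mem_range]

lemma Tset_bounds {N a b : ℕ} {ε : Finset ℕ} (h2b : 2*b ≤ a) :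
    ∀ x ∈ Tset N a b ε, N+1 ≤ x ∧ x ≤ N+2*a := by
  intro x hx
  rw [mem_Tset] at hx
  rcases hx with ⟨h1, h2⟩ | ⟨i, hi, ⟨_, h1, h2⟩ | ⟨_, h1, h2⟩⟩ <;> omega

lemma card_blkT {N : ℕ} {ε : Finset ℕ} {i : ℕ} : (blkT N ε i).card = 2 := by
  unfold blkT; split <;> rw [Nat.card_Icc] <;> omega

lemma card_Tset {N a b : ℕ} {ε : Finset ℕ} (h2b : 2*b ≤ a) :
    (Tset N a b ε).card = a := by
  have hdisj : Disjoint (Finset.Icc (N+4*b+1) (N+2*b+a)) ((Finset.range b).biUnion (blkT N ε)) := by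
    rw [Finset.disjoint_left]
    intro x hx hx'
    rw [Finset.mem_Icc] at hx
    rw [Finset.mem_biUnion] at hx'
    obtain ⟨i, hi, hxi⟩ := hx'
    rw [Finset.mem_range] at hi
    rw [mem_blkT] at hxi
    rcases hxi with ⟨_, h1, h2⟩ | ⟨_, h1, h2⟩ <;> omega
  have hpair : ∀ i ∈ Finset.range b, ∀ j ∈ Finset.range b, i ≠ j →
      Disjoint (blkT N ε i) (blkT N ε j) := by
    intro i _ j _ hij
    rw [Finset.disjoint_left]
    intro x hx hx'
    rw [mem_blkT] at hx hx'
    rcases hx with ⟨_, h1, h2⟩ | ⟨_, h1, h2⟩ <;> rcases hx' with ⟨_, h3, h4⟩ | ⟨_, h3, h4⟩ <;> omega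
  rw [Tset, Finset.card_union_of_disjoint hdisj, Finset.card_biUnion hpair]
  have : ∑ i ∈ Finset.range b, (blkT N ε i).card = 2 * b := by
    rw [Finset.sum_congr rfl (fun i _ => card_blkT), Finset.sum_const, Finset.card_range, smul_eq_mul]
    omega
  rw [this, Nat.card_Icc]
  omega

/-- Distinct gadgets intersect in at most `a - 2` points. -/
lemma card_Tset_inter {N a b : ℕ} {ε δ : Finset ℕ} (hε : ε ⊆ Finset.range b)
    (hδ : δ ⊆ Finset.range b) (hne : ε ≠ δ) (h2b : 2*b ≤ a) :
    (Tset N a b ε ∩ Tset N a b δ).card + 2 ≤ a := by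
  -- find an index where ε and δ differ
  have hdiff : ∃ i < b, ¬ (i ∈ ε ↔ i ∈ δ) := by
    by_contra h
    push_neg at h
    apply hne
    ext i
    by_cases hi : i < b
    · exact h i hi
    · constructor <;> intro hmem
      · exact absurd (Finset.mem_range.mp (hε hmem)) hi
      · exact absurd (Finset.mem_range.mp (hδ hmem)) hi
  obtain ⟨i₀, hi₀b, hi₀⟩ := hdiff
  have hsub : Tset N a b ε ∩ Tset N a b δ ⊆ Tset N a b ε \ blkT N ε i₀ := by
    intro x hx
    rw [Finset.mem_inter] at hx
    rw [Finset.mem_sdiff]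
    refine ⟨hx.1, fun hxblk => ?_⟩
    have hxδ := hx.2
    rw [mem_Tset] at hxδ
    rw [mem_blkT] at hxblk
    rcases hxδ with ⟨h1, h2⟩ | ⟨j, hj, ⟨hjδ, h1, h2⟩ | ⟨hjδ, h1, h2⟩⟩ <;>
      rcases hxblk with ⟨hiε, h3, h4⟩ | ⟨hiε, h3, h4⟩ <;>
      first
        | omega
        | (have hij : i₀ = j := by omega
           subst hij
           tauto)
  have hblksub : blkT N ε i₀ ⊆ Tset N a b ε := by
    intro x hx
    rw [mem_Tset]
    rw [mem_blkT] at hx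
    exact Or.inr ⟨i₀, hi₀b, hx⟩
  calc (Tset N a b ε ∩ Tset N a b δ).card + 2
      ≤ (Tset N a b ε \ blkT N ε i₀).card + 2 := by
        exact Nat.add_le_add_right (Finset.card_le_card hsub) 2
    _ = a := by
        rw [Finset.card_sdiff_of_subset hblksub, card_blkT, card_Tset h2b]
        have : 2 ≤ a := by omega
        omega

lemma marker_mem_Tset {N a b : ℕ} {ε : Finset ℕ} {i : ℕ} (hi : i < b) :
    i ∈ ε ↔ N+4*i+1 ∈ Tset N a b ε := by
  constructor
  · intro h
    rw [mem_Tset]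
    exact Or.inr ⟨i, hi, Or.inl ⟨h, by omega, by omega⟩⟩
  · intro h
    rw [mem_Tset] at h
    rcases h with ⟨h1, h2⟩ | ⟨j, hj, ⟨hjε, h1, h2⟩ | ⟨hjε, h1, h2⟩⟩
    · omega
    · have : i = j := by omega
      subst this; exact hjε
    · omega

lemma Tset_injOn {N a b : ℕ} {ε δ : Finset ℕ} (hε : ε ⊆ Finset.range b)
    (hδ : δ ⊆ Finset.range b) (h : Tset N a b ε = Tset N a b δ) : ε = δ := by
  ext i
  by_cases hi : i < b
  · rw [marker_mem_Tset hi, marker_mem_Tset hi, h]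
  · constructor <;> intro hmem
    · exact absurd (Finset.mem_range.mp (hε hmem)) hi
    · exact absurd (Finset.mem_range.mp (hδ hmem)) hi

lemma mem_KneserVerts {n r : ℕ} {A : Finset ℕ} :
    A ∈ KneserVerts n r ↔ A ⊆ Finset.Icc 1 n ∧ A.card = r := by
  simp [KneserVerts, Finset.mem_powersetCard]

lemma packing_inter_card {r : ℕ} (hr : 1 ≤ r) {S : Finset (Finset ℕ)}
    (hS : IsTwoPacking (2*r+1) r S) {A B : Finset ℕ} (hA : A ∈ S) (hB : B ∈ S)
    (hAB : A ≠ B) : 1 ≤ (A ∩ B).card ∧ (A ∩ B).card + 2 ≤ r := by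
  obtain ⟨hsub, hpack⟩ := hS
  obtain ⟨hadj, hcommon⟩ := hpack A hA B hB hAB
  have hAv := mem_KneserVerts.mp (hsub hA)
  have hBv := mem_KneserVerts.mp (hsub hB)
  constructor
  · -- not disjoint
    rcases Finset.card_eq_zero.mp.mt (fun h0 => hadj ⟨hAB, Finset.disjoint_iff_inter_eq_empty.mpr h0⟩) with h
    · omega
  · by_contra hc
    push_neg at hc
    -- card (A ∩ B) ≥ r - 1, so the complement of A ∪ B has ≥ r points
    have hABsub : A ∪ B ⊆ Finset.Icc 1 (2*r+1) := Finset.union_subset hAv.1 hBv.1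
    have hcardU : (A ∪ B).card + (A ∩ B).card = 2*r := by
      rw [Finset.card_union_add_card_inter, hAv.2, hBv.2]; omega
    have hC : r ≤ (Finset.Icc 1 (2*r+1) \ (A ∪ B)).card := by
      rw [Finset.card_sdiff_of_subset hABsub, Nat.card_Icc]
      omega
    obtain ⟨w, hwsub, hwcard⟩ := Finset.exists_subset_card_eq hC
    have hwIcc : w ⊆ Finset.Icc 1 (2*r+1) := hwsub.trans (Finset.sdiff_subset)
    have hwv : w ∈ KneserVerts (2*r+1) r := mem_KneserVerts.mpr ⟨hwIcc, hwcard⟩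
    have hdisjA : Disjoint A w := by
      rw [Finset.disjoint_right]
      intro x hxw hxA
      have := hwsub hxw
      rw [Finset.mem_sdiff] at this
      exact this.2 (Finset.mem_union_left _ hxA)
    have hdisjB : Disjoint w B := by
      rw [Finset.disjoint_left]
      intro x hxw hxB
      have := hwsub hxw
      rw [Finset.mem_sdiff] at this
      exact this.2 (Finset.mem_union_right _ hxB)
    have hAne : A ≠ w := by
      intro h
      subst h
      have : A = ∅ := disjoint_self.mp hdisjA
      rw [this] at hAv
      simp at hAv
      omega
    have hBne : w ≠ B := by
      intro h
      subst h
      have : w = ∅ := disjoint_self.mp hdisjB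
      rw [this] at hwcard
      simp at hwcard
      omega
    exact hcommon w hwv ⟨⟨hAne, hdisjA⟩, ⟨hBne, hdisjB⟩⟩

lemma disjoint_low_Tset {N a b : ℕ} {A ε : Finset ℕ} (hA : A ⊆ Finset.Icc 1 N)
    (h2b : 2*b ≤ a) : Disjoint A (Tset N a b ε) := by
  rw [Finset.disjoint_left]
  intro x hxA hxT
  have h1 := Finset.mem_Icc.mp (hA hxA)
  have h2 := Tset_bounds h2b x hxT
  omega

lemma union_inter_split {N a b : ℕ} {A B ε δ : Finset ℕ} (hA : A ⊆ Finset.Icc 1 N)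
    (hB : B ⊆ Finset.Icc 1 N) (h2b : 2*b ≤ a) :
    (A ∪ Tset N a b ε) ∩ (B ∪ Tset N a b δ) = (A ∩ B) ∪ (Tset N a b ε ∩ Tset N a b δ) := by
  ext x
  simp only [Finset.mem_inter, Finset.mem_union]
  constructor
  · rintro ⟨hx1 | hx1, hx2 | hx2⟩
    · exact Or.inl ⟨hx1, hx2⟩
    · exact absurd (Finset.mem_Icc.mp (hA hx1)) (by have := Tset_bounds h2b x hx2; omega)
    · exact absurd (Finset.mem_Icc.mp (hB hx2)) (by have := Tset_bounds h2b x hx1; omega)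
    · exact Or.inr ⟨hx1, hx2⟩
  · rintro (⟨h1, h2⟩ | ⟨h1, h2⟩)
    · exact ⟨Or.inl h1, Or.inl h2⟩
    · exact ⟨Or.inr h1, Or.inr h2⟩

lemma card_union_inter {N a b : ℕ} {A B ε δ : Finset ℕ} (hA : A ⊆ Finset.Icc 1 N)
    (hB : B ⊆ Finset.Icc 1 N) (h2b : 2*b ≤ a) :
    ((A ∪ Tset N a b ε) ∩ (B ∪ Tset N a b δ)).card
      = (A ∩ B).card + (Tset N a b ε ∩ Tset N a b δ).card := by
  rw [union_inter_split hA hB h2b, Finset.card_union_of_disjoint]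
  exact (disjoint_low_Tset hA h2b).mono Finset.inter_subset_left Finset.inter_subset_left

lemma low_recover {N a b : ℕ} {A ε : Finset ℕ} (hA : A ⊆ Finset.Icc 1 N)
    (h2b : 2*b ≤ a) : (A ∪ Tset N a b ε) ∩ Finset.Icc 1 N = A := by
  ext x
  simp only [Finset.mem_inter, Finset.mem_union, Finset.mem_Icc]
  constructor
  · rintro ⟨hx | hx, h1, h2⟩
    · exact hx
    · have := Tset_bounds h2b x hx
      omega
  · intro hx
    exact ⟨Or.inl hx, Finset.mem_Icc.mp (hA hx)⟩


theorem stmt_12 (r a : ℕ) (hr : 1 ≤ r) (ha : 2 ≤ a) :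
    2 ^ (a / 2) * twoPackingNum (2 * r + 1) r ≤
      twoPackingNum (2 * r + 1 + 2 * a) (r + a) := by
  set N := 2 * r + 1 with hNdef
  set b := a / 2 with hbdef
  have h2b : 2 * b ≤ a := by omega
  -- obtain an optimal 2-packing S of K(2r+1, r)
  have hne0 : {m | ∃ S, IsTwoPacking N r S ∧ S.card = m}.Nonempty :=
    ⟨0, ∅, ⟨Finset.empty_subset _, by simp⟩, Finset.card_empty⟩
  have hbdd0 : BddAbove {m | ∃ S, IsTwoPacking N r S ∧ S.card = m} := by
    refine ⟨(KneserVerts N r).card, ?_⟩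
    rintro m ⟨S, hS, rfl⟩
    exact Finset.card_le_card hS.1
  obtain ⟨S, hS, hScard⟩ := Nat.sSup_mem hne0 hbdd0
  have hSmem : ∀ A ∈ S, A ⊆ Finset.Icc 1 N ∧ A.card = r :=
    fun A hA => mem_KneserVerts.mp (hS.1 hA)
  -- the new packing
  set f : Finset ℕ × Finset ℕ → Finset ℕ := fun p => p.1 ∪ Tset N a b p.2 with hfdef
  set S' : Finset (Finset ℕ) := (S ×ˢ (Finset.range b).powerset).image f with hS'def
  -- membership characterization of the product
  have hprod : ∀ p ∈ S ×ˢ (Finset.range b).powerset,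
      p.1 ∈ S ∧ p.2 ⊆ Finset.range b := by
    intro p hp
    rw [Finset.mem_product] at hp
    exact ⟨hp.1, Finset.mem_powerset.mp hp.2⟩
  -- card of S'
  have hinj : Set.InjOn f ↑(S ×ˢ (Finset.range b).powerset) := by
    intro p hp q hq hfeq
    obtain ⟨hp1, hp2⟩ := hprod p (Finset.mem_coe.mp hp)
    obtain ⟨hq1, hq2⟩ := hprod q (Finset.mem_coe.mp hq)
    have hAlow := (hSmem _ hp1).1
    have hBlow := (hSmem _ hq1).1
    have hfeq' : p.1 ∪ Tset N a b p.2 = q.1 ∪ Tset N a b q.2 := hfeq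
    have hA : p.1 = q.1 := by
      rw [← low_recover hAlow h2b (ε := p.2), ← low_recover hBlow h2b (ε := q.2), hfeq']
    have hT : Tset N a b p.2 = Tset N a b q.2 := by
      have h1 : (p.1 ∪ Tset N a b p.2) \ p.1 = Tset N a b p.2 :=
        Finset.union_sdiff_cancel_left (disjoint_low_Tset hAlow h2b)
      have h2 : (q.1 ∪ Tset N a b q.2) \ q.1 = Tset N a b q.2 :=
        Finset.union_sdiff_cancel_left (disjoint_low_Tset hBlow h2b)
      rw [← h1, ← h2, hfeq', hA]
    exact Prod.ext hA (Tset_injOn hp2 hq2 hT)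
  have hcardS' : S'.card = 2 ^ b * S.card := by
    rw [hS'def, Finset.card_image_of_injOn hinj, Finset.card_product,
      Finset.card_powerset, Finset.card_range]
    ring
  -- S' is a 2-packing of K(N + 2a, r + a)
  have hvertsub : ∀ u ∈ S', u ∈ KneserVerts (N + 2*a) (r + a) := by
    intro u hu
    rw [hS'def, Finset.mem_image] at hu
    obtain ⟨p, hp, rfl⟩ := hu
    obtain ⟨hp1, hp2⟩ := hprod p hp
    obtain ⟨hAlow, hAcard⟩ := hSmem _ hp1
    rw [mem_KneserVerts]
    constructor
    · apply Finset.union_subset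
      · exact hAlow.trans (Finset.Icc_subset_Icc_right (by omega))
      · intro x hx
        have := Tset_bounds h2b x hx
        rw [Finset.mem_Icc]
        omega
    · rw [Finset.card_union_of_disjoint (disjoint_low_Tset hAlow h2b),
        hAcard, card_Tset h2b]
  have hpack' : IsTwoPacking (N + 2*a) (r + a) S' := by
    refine ⟨fun u hu => hvertsub u hu, ?_⟩
    intro u hu v hv huv
    rw [hS'def, Finset.mem_image] at hu hv
    obtain ⟨p, hp, rfl⟩ := hu
    obtain ⟨q, hq, rfl⟩ := hv
    obtain ⟨hp1, hp2⟩ := hprod p hp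
    obtain ⟨hq1, hq2⟩ := hprod q hq
    obtain ⟨hAlow, hAcard⟩ := hSmem _ hp1
    obtain ⟨hBlow, hBcard⟩ := hSmem _ hq1
    -- intersection cardinality bound
    have hcval : (f p ∩ f q).card
        = (p.1 ∩ q.1).card + (Tset N a b p.2 ∩ Tset N a b q.2).card :=
      card_union_inter hAlow hBlow h2b
    have hckey : (f p ∩ f q).card + 2 ≤ r + a ∧ 1 ≤ (f p ∩ f q).card := by
      rw [hcval]
      by_cases hAB : p.1 = q.1
      · -- same base set, different gadgets
        have hεδ : p.2 ≠ q.2 := by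
          intro h
          apply huv
          show p.1 ∪ Tset N a b p.2 = q.1 ∪ Tset N a b q.2
          rw [hAB, h]
        have h1 := card_Tset_inter (N := N) hp2 hq2 hεδ h2b
        have h2 : (p.1 ∩ q.1).card = r := by rw [hAB, Finset.inter_self, hBcard]
        omega
      · have h1 := packing_inter_card hr hS hp1 hq1 hAB
        have h2 : (Tset N a b p.2 ∩ Tset N a b q.2).card ≤ a := by
          calc (Tset N a b p.2 ∩ Tset N a b q.2).card
              ≤ (Tset N a b p.2).card := Finset.card_le_card Finset.inter_subset_left
            _ = a := card_Tset h2b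
        omega
    constructor
    · rintro ⟨-, hdisj⟩
      have : (f p ∩ f q).card = 0 := by
        rw [Finset.disjoint_iff_inter_eq_empty.mp hdisj, Finset.card_empty]
      omega
    · rintro w hw ⟨⟨-, hd1⟩, ⟨-, hd2⟩⟩
      obtain ⟨hwlow, hwcard⟩ := mem_KneserVerts.mp hw
      have hcup : (f p ∪ f q).card + (f p ∩ f q).card = 2 * (r + a) := by
        rw [Finset.card_union_add_card_inter]
        have h1 := (mem_KneserVerts.mp (hvertsub (f p) (by
          rw [hS'def, Finset.mem_image]; exact ⟨p, hp, rfl⟩))).2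
        have h2 := (mem_KneserVerts.mp (hvertsub (f q) (by
          rw [hS'def, Finset.mem_image]; exact ⟨q, hq, rfl⟩))).2
        omega
      have hdisjw : Disjoint w (f p ∪ f q) :=
        Finset.disjoint_union_right.mpr ⟨hd1.symm, hd2⟩
      have hsubw : w ∪ (f p ∪ f q) ⊆ Finset.Icc 1 (N + 2*a) := by
        apply Finset.union_subset hwlow
        apply Finset.union_subset
        · exact (mem_KneserVerts.mp (hvertsub (f p) (by
            rw [hS'def, Finset.mem_image]; exact ⟨p, hp, rfl⟩))).1
        · exact (mem_KneserVerts.mp (hvertsub (f q) (by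
            rw [hS'def, Finset.mem_image]; exact ⟨q, hq, rfl⟩))).1
      have hcount : w.card + (f p ∪ f q).card ≤ N + 2*a := by
        rw [← Finset.card_union_of_disjoint hdisjw]
        calc (w ∪ (f p ∪ f q)).card ≤ (Finset.Icc 1 (N + 2*a)).card :=
              Finset.card_le_card hsubw
          _ = N + 2*a := by rw [Nat.card_Icc]; omega
      omega
  -- conclude
  have hbdd1 : BddAbove {m | ∃ T, IsTwoPacking (N + 2*a) (r + a) T ∧ T.card = m} := by
    refine ⟨(KneserVerts (N + 2*a) (r + a)).card, ?_⟩
    rintro m ⟨T, hT, rfl⟩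
    exact Finset.card_le_card hT.1
  have hle : S'.card ≤ twoPackingNum (N + 2*a) (r + a) := by
    have : S'.card ∈ {m | ∃ T, IsTwoPacking (N + 2*a) (r + a) T ∧ T.card = m} :=
      ⟨S', hpack', rfl⟩
    exact le_csSup hbdd1 this
  have : twoPackingNum (2 * r + 1) r = S.card := hScard.symm
  rw [this]
  calc 2 ^ (a / 2) * S.card = S'.card := by rw [hcardS', hbdef]
    _ ≤ twoPackingNum (N + 2*a) (r + a) := hle
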